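/- Let Γ be a finite graph, K a finite graph, and suppose X ⊆ V(Γ) is a minimum-size set such that every subgraph of Γ isomorphic to K contains a vertex of X, and Y ⊆ V(Γ) is a minimum-size Aut(Γ)-invariant set with the same property, with |Y| = |X| · |V(K)|. Then for every Aut(Γ)-orbit V of vertices of Γ that intersects X, we have |V| = |V(K)| · |X ∩ V|. -/

import Mathlib

open scoped Classical

def KCover {W V : Type} (K : SimpleGraph W) (Γ : SimpleGraph V) (X : Set V) : Prop :=
  ∀ f : K →g Γ, Function.Injective f → ∃ w : W, f w ∈ X

def AutInvariant {V : Type} (Γ : SimpleGraph V) (X : Set V) : Prop :=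
  ∀ g : Γ ≃g Γ, (fun v => g v) '' X = X

def autOrbit {V : Type} (Γ : SimpleGraph V) (v : V) : Set V :=
  {w | ∃ g : Γ ≃g Γ, g v = w}

section Aux
variable {V : Type} [Fintype V] (Γ : SimpleGraph V)

noncomputable instance : Fintype (Γ ≃g Γ) :=
  Fintype.ofInjective (fun g => (g : V → V)) (fun g h e => by
    apply RelIso.toEquiv_injective; apply Equiv.coe_fn_injective; exact e)

lemma mem_orbit_self (v : V) : v ∈ autOrbit Γ v := ⟨RelIso.refl _, rfl⟩

lemma orbit_apply (g : Γ ≃g Γ) (u : V) : autOrbit Γ (g u) = autOrbit Γ u := by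
  ext w
  constructor
  · rintro ⟨k, rfl⟩
    exact ⟨g.trans k, by simp [RelIso.trans_apply]⟩
  · rintro ⟨k, rfl⟩
    exact ⟨(RelIso.symm g).trans k, by simp [RelIso.trans_apply]⟩

lemma orbit_eq_of_mem {u w : V} (h : w ∈ autOrbit Γ u) : autOrbit Γ w = autOrbit Γ u := by
  obtain ⟨g, rfl⟩ := h; exact orbit_apply Γ g u

open Finset in
lemma fiber_card (v w : V) (hw : w ∈ autOrbit Γ v) :
    (univ.filter fun g : Γ ≃g Γ => g v = w).card
      = (univ.filter fun g : Γ ≃g Γ => g v = v).card := by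
  obtain ⟨k, hk⟩ := hw
  apply Finset.card_nbij' (fun g => g.trans k.symm) (fun h => h.trans k)
  · intro g hg
    simp only [mem_coe, mem_filter, mem_univ, true_and] at hg ⊢
    simp [RelIso.trans_apply, hg, ← hk]
  · intro h hh
    simp only [mem_coe, mem_filter, mem_univ, true_and] at hh ⊢
    simp [RelIso.trans_apply, hh, hk]
  · intro g _
    apply RelIso.toEquiv_injective; apply Equiv.coe_fn_injective; funext x
    simp [RelIso.trans_apply]
  · intro g _
    apply RelIso.toEquiv_injective; apply Equiv.coe_fn_injective; funext x
    simp [RelIso.trans_apply]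

open Finset in
lemma count_aux (v : V) (S : Set V) :
    (univ.filter fun g : Γ ≃g Γ => g v ∈ S).card
      = (univ.filter fun w => w ∈ S ∩ autOrbit Γ v).card
        * (univ.filter fun g : Γ ≃g Γ => g v = v).card := by
  rw [Finset.card_eq_sum_card_fiberwise
    (f := fun g : Γ ≃g Γ => g v)
    (t := univ.filter fun w => w ∈ S ∩ autOrbit Γ v)
    (fun g hg => by
      simp only [mem_coe, mem_filter, mem_univ, true_and] at hg ⊢
      exact ⟨hg, ⟨g, rfl⟩⟩)]
  have : ∀ w ∈ (univ.filter fun w => w ∈ S ∩ autOrbit Γ v),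
      ((univ.filter fun g : Γ ≃g Γ => g v ∈ S).filter fun g => g v = w).card
        = (univ.filter fun g : Γ ≃g Γ => g v = v).card := by
    intro w hw
    simp only [mem_filter, mem_univ, true_and, Set.mem_inter_iff] at hw
    rw [Finset.filter_filter]
    rw [Finset.filter_congr (q := fun g : Γ ≃g Γ => g v = w) (fun g _ => by
      constructor
      · exact fun h => h.2
      · exact fun h => ⟨h ▸ hw.1, h⟩)]
    exact fiber_card Γ v w hw.2
  rw [Finset.sum_congr rfl this, Finset.sum_const, smul_eq_mul]

noncomputable def aCnt (X : Set V) (u : V) : ℕ :=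
  (Finset.univ.filter fun w => w ∈ X ∩ autOrbit Γ u).card

noncomputable def bCnt (u : V) : ℕ :=
  (Finset.univ.filter fun w => w ∈ autOrbit Γ u).card

noncomputable def cCnt (u : V) : ℕ :=
  (Finset.univ.filter fun g : Γ ≃g Γ => g u = u).card

noncomputable def tCnt (X : Set V) (u : V) : ℕ :=
  (Finset.univ.filter fun g : Γ ≃g Γ => g u ∈ X).card

lemma t_eq (X : Set V) (u : V) : tCnt Γ X u = aCnt Γ X u * cCnt Γ u :=
  count_aux Γ u X

lemma nG_eq (u : V) : Fintype.card (Γ ≃g Γ) = bCnt Γ u * cCnt Γ u := by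
  have h := count_aux Γ u Set.univ
  simp only [Set.mem_univ, Set.univ_inter, Finset.filter_true] at h
  simp only [bCnt, cCnt]
  rw [← Finset.card_univ]
  exact h

lemma c_pos (u : V) : 0 < cCnt Γ u :=
  Finset.card_pos.mpr ⟨RelIso.refl _, by simp⟩

lemma b_pos (u : V) : 0 < bCnt Γ u :=
  Finset.card_pos.mpr ⟨u, by simp [mem_orbit_self]⟩

lemma aCnt_apply (X : Set V) (g : Γ ≃g Γ) (u : V) : aCnt Γ X (g u) = aCnt Γ X u := by
  unfold aCnt; rw [orbit_apply]

lemma bCnt_apply (g : Γ ≃g Γ) (u : V) : bCnt Γ (g u) = bCnt Γ u := by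
  unfold bCnt; rw [orbit_apply]

lemma filter_inst {α : Type} (s : Finset α) (p : α → Prop) (i1 i2 : DecidablePred p) :
    @Finset.filter α p i1 s = @Finset.filter α p i2 s := by
  have h : i1 = i2 := Subsingleton.elim _ _
  rw [h]

lemma natCard_set (S : Set V) :
    Nat.card ↥S = (Finset.univ.filter fun w => w ∈ S).card := by
  rw [Nat.card_eq_fintype_card]
  exact Fintype.card_subtype _

end Aux

theorem stmt7 {W V : Type} [Fintype W] [Fintype V]
    (K : SimpleGraph W) (Γ : SimpleGraph V) (X Y : Set V)
    (hX : KCover K Γ X)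
    (hXmin : ∀ X' : Set V, KCover K Γ X' → Nat.card X ≤ Nat.card X')
    (hYcov : KCover K Γ Y) (hYinv : AutInvariant Γ Y)
    (hYmin : ∀ Y' : Set V, KCover K Γ Y' → AutInvariant Γ Y' → Nat.card Y ≤ Nat.card Y')
    (hcard : Nat.card Y = Nat.card X * Fintype.card W) :
    ∀ v : V, (autOrbit Γ v ∩ X).Nonempty →
      Nat.card (autOrbit Γ v) = Fintype.card W * Nat.card ↥(X ∩ autOrbit Γ v) := by
  intro v hv
  obtain ⟨x, hxO, hxX⟩ := hv
  set cW := Fintype.card W with hcW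
  set nG := Fintype.card (Γ ≃g Γ) with hnG
  have hnGpos : 0 < nG := by
    rw [hnG]
    exact Fintype.card_pos_iff.mpr ⟨RelIso.refl _⟩
  -- W is nonempty
  have hWpos : 0 < cW := by
    by_contra h
    push_neg at h
    haveI : IsEmpty W := Fintype.card_eq_zero_iff.mp (Nat.le_zero.mp h)
    have hcov : KCover K Γ (∅ : Set V) := fun f hf => (IsEmpty.false (hX f hf).choose).elim
    have h0 := hXmin ∅ hcov
    have h0' : Nat.card ↥(∅ : Set V) = 0 := by simp
    have hpos : (0 : ℕ) < Nat.card X := by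
      haveI : Nonempty ↥X := ⟨⟨x, hxX⟩⟩
      exact Nat.card_pos
    omega
  -- the set of vertices in "good" orbits
  set Y' : Set V := {u | bCnt Γ u ≤ cW * aCnt Γ X u} with hY'
  -- Y' covers all copies of K
  have covY' : KCover K Γ Y' := by
    intro f hf
    by_contra hno
    push_neg at hno
    have hbad : ∀ w : W, cW * tCnt Γ X (f w) + 1 ≤ nG := by
      intro w
      have hb : cW * aCnt Γ X (f w) < bCnt Γ (f w) :=
        lt_of_not_ge fun hle => (hno w) hle
      have : cW * tCnt Γ X (f w) < nG := by
        rw [t_eq, hnG, nG_eq Γ (f w), ← mul_assoc]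
        exact (Nat.mul_lt_mul_right (c_pos Γ (f w))).mpr hb
      omega
    -- every automorphism hits X through some w
    have hcover : nG ≤ ∑ w : W, tCnt Γ X (f w) := by
      rw [hnG, ← Finset.card_univ]
      have hsub : (Finset.univ : Finset (Γ ≃g Γ)) ⊆
          Finset.univ.biUnion fun w : W =>
            Finset.univ.filter fun g : Γ ≃g Γ => g (f w) ∈ X := by
        intro g _
        have hinj : Function.Injective (g.toHom.comp f) := by
          intro a b hab
          exact hf (g.injective hab)
        obtain ⟨w, hw⟩ := hX (g.toHom.comp f) hinj
        refine Finset.mem_biUnion.mpr ⟨w, Finset.mem_univ _, ?_⟩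
        simpa using hw
      calc (Finset.univ : Finset (Γ ≃g Γ)).card
          ≤ _ := Finset.card_le_card hsub
        _ ≤ ∑ w : W, tCnt Γ X (f w) := Finset.card_biUnion_le
    have : cW * nG ≤ cW * ∑ w : W, tCnt Γ X (f w) := Nat.mul_le_mul_left _ hcover
    rw [Finset.mul_sum] at this
    have hsum : ∑ w : W, cW * tCnt Γ X (f w) ≤ ∑ _w : W, (nG - 1) :=
      Finset.sum_le_sum fun w _ => by have := hbad w; omega
    rw [Finset.sum_const, Finset.card_univ, smul_eq_mul, ← hcW] at hsum
    have : cW * nG ≤ cW * (nG - 1) := le_trans this hsum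
    have := Nat.le_of_mul_le_mul_left this hWpos
    omega
  -- Y' is invariant
  have invY' : AutInvariant Γ Y' := by
    intro g
    ext z
    simp only [Set.mem_image]
    constructor
    · rintro ⟨u, hu, rfl⟩
      show bCnt Γ (g u) ≤ cW * aCnt Γ X (g u)
      rw [bCnt_apply, aCnt_apply]
      exact hu
    · intro hz
      refine ⟨g.symm z, ?_, by simp⟩
      show bCnt Γ (g.symm z) ≤ cW * aCnt Γ X (g.symm z)
      rw [bCnt_apply Γ g.symm, aCnt_apply Γ X g.symm]
      exact hz
  -- counting
  set Yf : Finset V := Finset.univ.filter fun u => u ∈ Y' with hYf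
  set Xf : Finset V := Finset.univ.filter fun u => u ∈ X with hXf
  set N : ℕ := ∑ u ∈ Yf, tCnt Γ X u with hN
  have hgood : ∀ u ∈ Yf, nG ≤ cW * tCnt Γ X u := by
    intro u hu
    rw [hYf, Finset.mem_filter] at hu
    have hu' : bCnt Γ u ≤ cW * aCnt Γ X u := hu.2
    rw [t_eq, hnG, nG_eq Γ u, ← mul_assoc]
    exact Nat.mul_le_mul_right _ hu'
  have lower : Yf.card * nG ≤ cW * N := by
    rw [hN, Finset.mul_sum]
    calc Yf.card * nG = ∑ _u ∈ Yf, nG := by rw [Finset.sum_const, smul_eq_mul]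
      _ ≤ ∑ u ∈ Yf, cW * tCnt Γ X u := Finset.sum_le_sum hgood
  have hswap : N = ∑ g : Γ ≃g Γ, (Yf.filter fun u => g u ∈ X).card := by
    rw [hN]
    simp_rw [tCnt, Finset.card_filter]
    rw [Finset.sum_comm]
  have hterm_le : ∀ g : Γ ≃g Γ, (Yf.filter fun u => g u ∈ X).card ≤ Xf.card := by
    intro g
    apply Finset.card_le_card_of_injOn (fun u => g u)
    · intro u hu
      rw [Finset.mem_coe, Finset.mem_filter] at hu
      rw [Finset.mem_coe, hXf, Finset.mem_filter]
      exact ⟨Finset.mem_univ _, hu.2⟩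
    · exact fun a _ b _ hab => g.injective hab
  have upper : N ≤ nG * Xf.card := by
    rw [hswap]
    calc ∑ g : Γ ≃g Γ, (Yf.filter fun u => g u ∈ X).card
        ≤ ∑ _g : Γ ≃g Γ, Xf.card := Finset.sum_le_sum fun g _ => hterm_le g
      _ = nG * Xf.card := by rw [Finset.sum_const, Finset.card_univ, smul_eq_mul, hnG]
  -- cardinality bookkeeping
  have hXcard : Nat.card X = Xf.card := natCard_set X
  have hY'card : Nat.card Y' = Yf.card := by
    rw [hYf]
    exact (natCard_set Y').trans (congrArg Finset.card (filter_inst _ _ _ _))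
  have hYle : Xf.card * cW ≤ Yf.card := by
    have := hYmin Y' covY' invY'
    rw [hY'card, hcard, hXcard] at this
    exact this
  have hYge : Yf.card ≤ Xf.card * cW := by
    have h1 : Yf.card * nG ≤ (Xf.card * cW) * nG := by
      calc Yf.card * nG ≤ cW * N := lower
        _ ≤ cW * (nG * Xf.card) := Nat.mul_le_mul_left _ upper
        _ = (Xf.card * cW) * nG := by ring
    exact Nat.le_of_mul_le_mul_right h1 hnGpos
  have hYeq : Yf.card = Xf.card * cW := le_antisymm hYge hYle
  -- equality throughout
  have hNeq : cW * N = Yf.card * nG := by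
    have h2 : cW * N ≤ Yf.card * nG := by
      calc cW * N ≤ cW * (nG * Xf.card) := Nat.mul_le_mul_left _ upper
        _ = Yf.card * nG := by rw [hYeq]; ring
    exact le_antisymm h2 lower
  have hNtop : N = nG * Xf.card := by
    have h3 : cW * N = cW * (nG * Xf.card) := by
      rw [hNeq, hYeq]; ring
    exact Nat.eq_of_mul_eq_mul_left hWpos h3
  -- every term in the upper bound is tight; in particular X ⊆ Y'
  have hterm_eq : ∀ g : Γ ≃g Γ, (Yf.filter fun u => g u ∈ X).card = Xf.card := by
    have hsum_eq : ∑ g : Γ ≃g Γ, (Yf.filter fun u => g u ∈ X).card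
        = ∑ _g : Γ ≃g Γ, Xf.card := by
      rw [← hswap, hNtop, Finset.sum_const, Finset.card_univ, smul_eq_mul, hnG]
    intro g
    exact (Finset.sum_eq_sum_iff_of_le fun g _ => hterm_le g).mp hsum_eq g
      (Finset.mem_univ _)
  have hXsubY' : X ⊆ Y' := by
    have h4 := hterm_eq (RelIso.refl _)
    have h5 : (Yf.filter fun u => (RelIso.refl Γ.Adj : Γ ≃g Γ) u ∈ X)
        = Yf.filter fun u => u ∈ X := by
      apply Finset.filter_congr
      intro u _
      simp
    rw [h5] at h4
    have hsub : (Yf.filter fun u => u ∈ X) ⊆ Xf := by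
      intro u hu
      rw [Finset.mem_filter] at hu
      rw [hXf, Finset.mem_filter]
      exact ⟨Finset.mem_univ _, hu.2⟩
    have := Finset.eq_of_subset_of_card_le hsub (le_of_eq h4.symm)
    intro u hu
    have hu' : u ∈ Xf := by rw [hXf, Finset.mem_filter]; exact ⟨Finset.mem_univ _, hu⟩
    rw [← this, Finset.mem_filter] at hu'
    have := hu'.1
    rw [hYf, Finset.mem_filter] at this
    exact this.2
  -- v lies in Y'
  have hxY' : x ∈ Y' := hXsubY' hxX
  have horb : autOrbit Γ x = autOrbit Γ v := orbit_eq_of_mem Γ hxO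
  have hvY' : v ∈ Y' := by
    show bCnt Γ v ≤ cW * aCnt Γ X v
    have hb : bCnt Γ x = bCnt Γ v := by unfold bCnt; rw [horb]
    have ha : aCnt Γ X x = aCnt Γ X v := by unfold aCnt; rw [horb]
    rw [← hb, ← ha]
    exact hxY'
  -- per-term equality in the lower bound
  have hlow_eq : ∀ u ∈ Yf, nG = cW * tCnt Γ X u := by
    have hsum_eq : ∑ _u ∈ Yf, nG = ∑ u ∈ Yf, cW * tCnt Γ X u := by
      rw [Finset.sum_const, smul_eq_mul, ← Finset.mul_sum, ← hN, hNeq]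
    exact fun u hu => (Finset.sum_eq_sum_iff_of_le hgood).mp hsum_eq u hu
  have hvYf : v ∈ Yf := by rw [hYf, Finset.mem_filter]; exact ⟨Finset.mem_univ _, hvY'⟩
  have hveq : nG = cW * tCnt Γ X v := hlow_eq v hvYf
  rw [t_eq, hnG, nG_eq Γ v, ← mul_assoc] at hveq
  have hfinal : bCnt Γ v = cW * aCnt Γ X v :=
    Nat.eq_of_mul_eq_mul_right (c_pos Γ v) hveq
  -- translate back to Nat.card
  have g1 : Nat.card (autOrbit Γ v) = bCnt Γ v :=
    (natCard_set (autOrbit Γ v)).trans (congrArg Finset.card (filter_inst _ _ _ _))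
  have g2 : Nat.card ↥(X ∩ autOrbit Γ v) = aCnt Γ X v :=
    (natCard_set (X ∩ autOrbit Γ v)).trans (congrArg Finset.card (filter_inst _ _ _ _))
  rw [g1, g2]
  exact hfinal
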